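/- Let J be a nonempty proper subset of {0,…,d}. For every z ∈ A_J and x ∈ 𝔩(J), the element ι(x)z − zι(x) again lies in A_J; and if moreover ρ'(z)(δ_0) = 0, then ρ'(ι(x)z − zι(x))(δ_0) = 0. -/

import Mathlib

open UniversalEnvelopingAlgebra

attribute [local instance 100] LieRing.ofAssociativeRing


section gf
variable {K : Type} [Field K] [CharZero K]

noncomputable def gfun (t : K) (r : ℕ) : K :=
  ∏ s ∈ Finset.range r, ((t - s - 1) * (-(s : K) - 1)⁻¹)

lemma gaux_ne (s : ℕ) : (-(s : K) - 1) ≠ 0 := by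
  intro h
  exact Nat.cast_add_one_ne_zero s (by linear_combination -h)

lemma gfun_zero (r : ℕ) : gfun (0 : K) r = 1 := by
  unfold gfun
  apply Finset.prod_eq_one
  intro s _
  have h := gaux_ne (K := K) s
  field_simp
  ring

lemma gfun_succ (t : K) (r : ℕ) :
    gfun t (r + 1) = gfun t r * ((t - r - 1) * (-(r : K) - 1)⁻¹) :=
  Finset.prod_range_succ _ _

lemma gfun_cocycle (t : K) (r r' : ℕ) :
    gfun t r * gfun (t - r) r' = gfun t (r + r') * gfun (-(r : K)) r' := by
  induction r' with
  | zero => simp [gfun]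
  | succ n ih =>
      calc gfun t r * gfun (t - r) (n + 1)
          = (gfun t r * gfun (t - r) n) * ((t - r - n - 1) * (-(n : K) - 1)⁻¹) := by
            rw [gfun_succ]; ring
        _ = (gfun t (r + n) * gfun (-(r : K)) n) * ((t - r - n - 1) * (-(n : K) - 1)⁻¹) := by
            rw [ih]
        _ = gfun t (r + (n + 1)) * gfun (-(r : K)) (n + 1) := by
            rw [show r + (n + 1) = (r + n) + 1 from rfl, gfun_succ, gfun_succ]
            have h2 := gaux_ne (K := K) n
            have h3 := gaux_ne (K := K) (r + n)
            push_cast at h3 ⊢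
            have key : ((-((r:K) + n) - 1)⁻¹ * (-(r:K) - ↑n - 1)) = 1 := by
              rw [show (-(r:K) - ↑n - 1) = (-((r:K) + ↑n) - 1) from by ring]
              exact inv_mul_cancel₀ h3
            linear_combination
              (-(gfun t (r+n) * gfun (-(r:K)) n * ((t - ↑r - ↑n - 1) * (-(n:K)-1)⁻¹))) * key
end gf

set_option linter.unusedSectionVars false

section cf
variable (K : Type) [Field K] [CharZero K] {d : ℕ}

noncomputable def cfun (μ ν : Fin (d+1) → ℤ) : K :=
  ∏ j, gfun ((ν j : ℤ) : K) ((-(μ j)).toNat)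

lemma cfun_zero (μ : Fin (d+1) → ℤ) : cfun K μ 0 = 1 := by
  unfold cfun
  apply Finset.prod_eq_one
  intro j _
  simp [gfun_zero]

lemma cfun_zero_left (ν : Fin (d+1) → ℤ) : cfun K 0 ν = 1 := by
  unfold cfun
  apply Finset.prod_eq_one
  intro j _
  simp [gfun]

lemma cfun_cocycle (μ μ' ν : Fin (d+1) → ℤ)
    (h : ∀ j, (0 ≤ μ j ∧ 0 ≤ μ' j) ∨ (μ j ≤ 0 ∧ μ' j ≤ 0)) :
    cfun K μ ν * cfun K μ' (ν + μ) = cfun K (μ + μ') ν * cfun K μ' μ := by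
  unfold cfun
  rw [← Finset.prod_mul_distrib, ← Finset.prod_mul_distrib]
  refine Finset.prod_congr rfl fun j _ => ?_
  rcases h j with ⟨h1, h2⟩ | ⟨h1, h2⟩
  · rw [Pi.add_apply, Pi.add_apply,
      show (-(μ j)).toNat = 0 from by omega,
      show (-(μ' j)).toNat = 0 from by omega,
      show (-(μ j + μ' j)).toNat = 0 from by omega]
    simp [gfun]
  · obtain ⟨r, hr⟩ : ∃ r : ℕ, μ j = -(r:ℤ) := ⟨(-(μ j)).toNat, by omega⟩
    obtain ⟨r', hr'⟩ : ∃ r' : ℕ, μ' j = -(r':ℤ) := ⟨(-(μ' j)).toNat, by omega⟩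
    have e3 : (-((μ + μ') j)).toNat = r + r' := by rw [Pi.add_apply, hr, hr']; omega
    have e1 : (-(μ j)).toNat = r := by omega
    have e2 : (-(μ' j)).toNat = r' := by omega
    have e4 : (((ν + μ) j : ℤ) : K) = ((ν j : ℤ) : K) - (r : K) := by
      rw [Pi.add_apply, hr]; push_cast; ring
    have e5 : ((μ j : ℤ) : K) = -(r : K) := by rw [hr]; push_cast; ring
    rw [e1, e2, e3, e4, e5]
    exact gfun_cocycle _ _ _
end cf

section pred
variable {K : Type} [Field K] [CharZero K] {d : ℕ}
variable (ρ' : UniversalEnvelopingAlgebra K (Matrix (Fin (d+1)) (Fin (d+1)) K) →ₐ[K]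
    Module.End K ((Fin (d+1) → ℤ) →₀ K))
variable (J : Set (Fin (d+1)))

def Pred (z : UniversalEnvelopingAlgebra K (Matrix (Fin (d+1)) (Fin (d+1)) K)) : Prop :=
  ∃ s : (Fin (d+1) → ℤ) →₀ K,
    (∀ μ ∈ s.support, ∀ j, (j ∈ J → 0 ≤ μ j) ∧ (j ∉ J → μ j ≤ 0)) ∧
    ∀ ν, ρ' z (Finsupp.single ν (1:K)) =
      s.sum fun μ t => (t * cfun K μ ν) • Finsupp.single (ν + μ) (1:K)

lemma Pred_mul {z₁ z₂} (h₁ : Pred ρ' J z₁) (h₂ : Pred ρ' J z₂) : Pred ρ' J (z₁ * z₂) := by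
  classical
  obtain ⟨s₁, hs₁, hf₁⟩ := h₁
  obtain ⟨s₂, hs₂, hf₂⟩ := h₂
  refine ⟨s₂.sum fun μ₂ t₂ => s₁.sum fun μ₁ t₁ =>
      Finsupp.single (μ₂ + μ₁) (t₂ * t₁ * cfun K μ₁ μ₂), ?_, ?_⟩
  · intro μ hμ
    have h := Finsupp.support_sum hμ
    rw [Finset.mem_biUnion] at h
    obtain ⟨μ₂, hμ₂, h⟩ := h
    have h' := Finsupp.support_sum h
    rw [Finset.mem_biUnion] at h'
    obtain ⟨μ₁, hμ₁, h''⟩ := h'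
    have hμeq : μ = μ₂ + μ₁ := by
      have := Finsupp.support_single_subset h''
      simpa using this
    subst hμeq
    intro j
    rw [Finsupp.mem_support_iff] at hμ₂ hμ₁
    constructor
    · intro hj
      simp only [Pi.add_apply]
      exact add_nonneg ((hs₂ μ₂ (Finsupp.mem_support_iff.2 hμ₂) j).1 hj)
        ((hs₁ μ₁ (Finsupp.mem_support_iff.2 hμ₁) j).1 hj)
    · intro hj
      simp only [Pi.add_apply]
      exact add_nonpos ((hs₂ μ₂ (Finsupp.mem_support_iff.2 hμ₂) j).2 hj)
        ((hs₁ μ₁ (Finsupp.mem_support_iff.2 hμ₁) j).2 hj)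
  · intro ν
    rw [map_mul]
    show ρ' z₁ (ρ' z₂ (Finsupp.single ν 1)) = _
    rw [hf₂ ν, map_finsuppSum,
      Finsupp.sum_sum_index (fun _ => by simp) (fun μ t t' => by simp [add_mul, add_smul])]
    refine Finsupp.sum_congr fun μ₂ hμ₂ => ?_
    rw [map_smul, hf₁ (ν + μ₂),
      Finsupp.sum_sum_index (fun _ => by simp) (fun μ t t' => by simp [add_mul, add_smul]),
      Finsupp.smul_sum]
    refine Finsupp.sum_congr fun μ₁ hμ₁ => ?_
    rw [Finsupp.sum_single_index (by simp), smul_smul, ← add_assoc]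
    have hc : cfun K μ₂ ν * cfun K μ₁ (ν + μ₂) = cfun K (μ₂ + μ₁) ν * cfun K μ₁ μ₂ := by
      refine cfun_cocycle K μ₂ μ₁ ν fun j => ?_
      by_cases hj : j ∈ J
      · exact Or.inl ⟨(hs₂ μ₂ hμ₂ j).1 hj, (hs₁ μ₁ hμ₁ j).1 hj⟩
      · exact Or.inr ⟨(hs₂ μ₂ hμ₂ j).2 hj, (hs₁ μ₁ hμ₁ j).2 hj⟩
    congr 1
    linear_combination (s₂ μ₂ * s₁ μ₁) * hc

lemma Pred_add {z₁ z₂} (h₁ : Pred ρ' J z₁) (h₂ : Pred ρ' J z₂) : Pred ρ' J (z₁ + z₂) := by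
  classical
  obtain ⟨s₁, hs₁, hf₁⟩ := h₁
  obtain ⟨s₂, hs₂, hf₂⟩ := h₂
  refine ⟨s₁ + s₂, ?_, ?_⟩
  · intro μ hμ
    rcases Finset.mem_union.1 (Finsupp.support_add hμ) with h | h
    · exact hs₁ μ h
    · exact hs₂ μ h
  · intro ν
    rw [map_add, LinearMap.add_apply, hf₁ ν, hf₂ ν,
      Finsupp.sum_add_index' (fun _ => by simp) (fun μ t t' => by simp [add_mul, add_smul])]

lemma Pred_algebraMap (r : K) :
    Pred ρ' J (algebraMap K (UniversalEnvelopingAlgebra K (Matrix (Fin (d+1)) (Fin (d+1)) K)) r) := by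
  refine ⟨Finsupp.single 0 r, ?_, ?_⟩
  · intro μ hμ
    have := Finsupp.support_single_subset hμ
    rw [Finset.mem_singleton] at this
    subst this
    intro j
    simp
  · intro ν
    rw [AlgHom.commutes, Module.algebraMap_end_apply,
      Finsupp.sum_single_index (by simp), cfun_zero_left, mul_one, add_zero]

lemma Pred_gen (a b : Fin (d+1)) (ha : a ∈ J) (hb : b ∉ J)
    (hρ : ∀ ν : Fin (d+1) → ℤ,
      ρ' (ι K (Matrix.single a b (1:K))) (Finsupp.single ν (1:K)) =
        (ν b - 1) • Finsupp.single (ν + Pi.single a 1 - Pi.single b 1) (1:K)) :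
    Pred ρ' J (ι K (Matrix.single a b (1:K))) := by
  classical
  have hab : a ≠ b := fun h => hb (h ▸ ha)
  refine ⟨Finsupp.single (Pi.single a 1 - Pi.single b 1) (-1 : K), ?_, ?_⟩
  · intro μ hμ
    have := Finsupp.support_single_subset hμ
    rw [Finset.mem_singleton] at this
    subst this
    intro j
    constructor
    · intro hj
      have hjb : j ≠ b := fun h => hb (h ▸ hj)
      simp [Pi.single_apply, hjb]
      split <;> omega
    · intro hj
      have hja : j ≠ a := fun h => hj (h ▸ ha)
      simp [Pi.single_apply, hja]
      split <;> omega
  · intro ν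
    rw [hρ ν, Finsupp.sum_single_index (by simp)]
    have hidx : ν + Pi.single a 1 - Pi.single b 1 = ν + (Pi.single a 1 - Pi.single b 1) := by
      ring
    have hc : cfun K (Pi.single a 1 - Pi.single b 1) ν = -(((ν b : ℤ) : K) - 1) := by
      unfold cfun
      rw [Finset.prod_eq_single b]
      · have : (-(((Pi.single a 1 - Pi.single b 1) : Fin (d+1) → ℤ) b)).toNat = 1 := by
          simp [Pi.single_apply, hab.symm]
        rw [this]
        simp [gfun]
      · intro j _ hjb
        have : (-(((Pi.single a 1 - Pi.single b 1) : Fin (d+1) → ℤ) j)).toNat = 0 := by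
          simp [Pi.single_apply, hjb]
          split <;> omega
        rw [this, gfun]
        simp
      · intro h
        exact absurd (Finset.mem_univ b) h
    rw [hidx, hc]
    have : ((ν b - 1 : ℤ)) • (Finsupp.single (ν + (Pi.single a 1 - Pi.single b 1)) (1:K))
        = (((ν b - 1 : ℤ) : K)) • (Finsupp.single (ν + (Pi.single a 1 - Pi.single b 1)) (1:K)) := by
      rw [Int.cast_smul_eq_zsmul]
    rw [this]
    congr 1
    push_cast
    ring

lemma Pred_vanish {z} (h : Pred ρ' J z)
    (h0 : ρ' z (Finsupp.single (0 : Fin (d+1) → ℤ) (1:K)) = 0) :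
    ∀ v, ρ' z v = 0 := by
  obtain ⟨s, _, hf⟩ := h
  have hs0 : s = 0 := by
    have := hf 0
    rw [h0] at this
    have h2 : (0 : (Fin (d+1) → ℤ) →₀ K) = s.sum fun μ t => Finsupp.single μ t := by
      rw [this]
      refine Finsupp.sum_congr fun μ hμ => ?_
      rw [cfun_zero, mul_one, zero_add, Finsupp.smul_single', mul_one]
    rw [Finsupp.sum_single] at h2
    exact h2.symm
  have hz : ∀ ν, ρ' z (Finsupp.single ν (1:K)) = 0 := by
    intro ν
    rw [hf ν, hs0, Finsupp.sum_zero_index]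
  intro v
  have hv : v = v.sum fun ν c => c • Finsupp.single ν (1:K) := by
    conv_lhs => rw [← Finsupp.sum_single v]
    refine Finsupp.sum_congr fun ν hν => ?_
    rw [Finsupp.smul_single', mul_one]
  rw [hv, map_finsuppSum]
  rw [Finsupp.sum]
  refine Finset.sum_eq_zero fun ν hν => ?_
  rw [map_smul, hz ν, smul_zero]

end pred

lemma bracket_stdBasis {K : Type} [Field K] {n : ℕ} (x : Matrix (Fin n) (Fin n) K) (a b : Fin n)
    (hcol : ∀ i, x i a = 0) :
    ⁅x, Matrix.single a b (1:K)⁆ = ∑ j, (-(x b j)) • Matrix.single a j (1:K) := by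
  rw [Ring.lie_def]
  ext i j'
  simp only [Matrix.sub_apply, Matrix.mul_apply, Matrix.single, Matrix.of_apply,
    Matrix.sum_apply, Matrix.smul_apply, smul_eq_mul, mul_ite, mul_one, mul_zero, ite_and]
  by_cases h1 : a = i <;> by_cases h2 : b = j' <;>
    simp_all [Finset.sum_ite_eq, Finset.sum_ite_eq']

/-- For J a nonempty proper subset of {0,…,d}, z ∈ A_J and x ∈ 𝔩(J),
the commutator ι(x)z − zι(x) again lies in A_J; and if ρ'(z)(δ_0) = 0 then also
ρ'(ι(x)z − zι(x))(δ_0) = 0 (U(𝔫_J⁺) ∩ 𝔟 is ad(𝔩(J))-invariant). -/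
theorem stmt_14 (K : Type) [Field K] [CharZero K] (d : ℕ) (hd : 1 ≤ d)
    (ρ' : UniversalEnvelopingAlgebra K (Matrix (Fin (d+1)) (Fin (d+1)) K) →ₐ[K]
        Module.End K ((Fin (d+1) → ℤ) →₀ K))
    (hρ'₁ : ∀ (i j : Fin (d+1)), i ≠ j → ∀ ν : Fin (d+1) → ℤ,
      ρ' (ι K (Matrix.single i j (1:K))) (Finsupp.single ν (1:K)) =
        (ν j - 1) • Finsupp.single (ν + Pi.single i 1 - Pi.single j 1) (1:K))
    (hρ'₂ : ∀ (k : Fin (d+1)) (ν : Fin (d+1) → ℤ),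
      ρ' (ι K (Matrix.single k k (1:K))) (Finsupp.single ν (1:K)) =
        ν k • Finsupp.single ν (1:K))
    (J : Set (Fin (d+1))) (hJ : J.Nonempty) (hJ' : J ≠ Set.univ)
    (AJ : Subalgebra K (UniversalEnvelopingAlgebra K (Matrix (Fin (d+1)) (Fin (d+1)) K)))
    (hAJ : AJ = Algebra.adjoin K
      {w | ∃ i ∈ J, ∃ j ∉ J, w = ι K (Matrix.single i j (1:K))})
    (z : UniversalEnvelopingAlgebra K (Matrix (Fin (d+1)) (Fin (d+1)) K))
    (hz : z ∈ AJ)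
    (x : Matrix (Fin (d+1)) (Fin (d+1)) K)
    (hx : ∀ i j : Fin (d+1), i ∈ J ∨ j ∈ J → x i j = 0) :
    (ι K x * z - z * ι K x) ∈ AJ ∧
    (ρ' z (Finsupp.single (0 : Fin (d+1) → ℤ) (1:K)) = 0 →
      ρ' (ι K x * z - z * ι K x) (Finsupp.single (0 : Fin (d+1) → ℤ) (1:K)) = 0) := by
  classical
  subst hAJ
  constructor
  · -- part 1
    induction hz using Algebra.adjoin_induction with
    | mem w hw =>
        obtain ⟨a, ha, b, hb, rfl⟩ := hw
        have hbr : ι K x * ι K (Matrix.single a b (1:K)) -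
            ι K (Matrix.single a b (1:K)) * ι K x =
            ι K ⁅x, Matrix.single a b (1:K)⁆ := by
          rw [LieHom.map_lie, Ring.lie_def]
        rw [hbr, bracket_stdBasis x a b (fun i => hx i a (Or.inr ha)),
          ← LieHom.coe_toLinearMap, map_sum]
        refine Subalgebra.sum_mem _ fun j _ => ?_
        rw [map_smul]
        by_cases hj : j ∈ J
        · rw [hx b j (Or.inr hj), neg_zero, zero_smul]
          exact Subalgebra.zero_mem _
        · refine Subalgebra.smul_mem _ ?_ _
          rw [LieHom.coe_toLinearMap]
          exact Algebra.subset_adjoin ⟨a, ha, j, hj, rfl⟩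
    | algebraMap r =>
        rw [Algebra.commutes r (ι K x), sub_self]
        exact Subalgebra.zero_mem _
    | add z₁ z₂ h₁ h₂ ih₁ ih₂ =>
        have e : ι K x * (z₁ + z₂) - (z₁ + z₂) * ι K x =
            (ι K x * z₁ - z₁ * ι K x) + (ι K x * z₂ - z₂ * ι K x) := by noncomm_ring
        rw [e]
        exact add_mem ih₁ ih₂
    | mul z₁ z₂ h₁ h₂ ih₁ ih₂ =>
        have e : ι K x * (z₁ * z₂) - (z₁ * z₂) * ι K x =
            (ι K x * z₁ - z₁ * ι K x) * z₂ + z₁ * (ι K x * z₂ - z₂ * ι K x) := by noncomm_ring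
        rw [e]
        exact add_mem (mul_mem ih₁ h₂) (mul_mem h₁ ih₂)
  · -- part 2
    have hpred : Pred ρ' J z := by
      induction hz using Algebra.adjoin_induction with
      | mem w hw =>
          obtain ⟨a, ha, b, hb, rfl⟩ := hw
          exact Pred_gen ρ' J a b ha hb (hρ'₁ a b (fun h => hb (h ▸ ha)))
      | algebraMap r => exact Pred_algebraMap ρ' J r
      | add z₁ z₂ h₁ h₂ ih₁ ih₂ => exact Pred_add ρ' J ih₁ ih₂
      | mul z₁ z₂ h₁ h₂ ih₁ ih₂ => exact Pred_mul ρ' J ih₁ ih₂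
    intro h0
    have hvan := Pred_vanish ρ' J hpred h0
    rw [map_sub, map_mul, map_mul, LinearMap.sub_apply, Module.End.mul_apply,
      Module.End.mul_apply, h0, map_zero, hvan]
    simp
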